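/- Let H be a square-free simple graph, k ≥ 1, and P = v₀v₁…v_k a path in H such that deg_H(v_j) is odd for all j ∈ {1,…,k−1}. Let J_P be the caterpillar gadget of P (path y u₁ … u_{k−1} z with pendant w_j adjacent to u_j, and w_j required to map to v_j). Then the number of homomorphisms σ : J_P → H with σ(y) = v₁, σ(z) = v_{k−1} and σ(w_j) = v_j for all j, is odd. -/

import Mathlib

/-- The "straight" homomorphism of the caterpillar gadget. -/
def capPlus {V : Type*} (v : ℕ → V) (k : ℕ) : Fin (k + 1) → V :=
  fun j => if j.1 = k then v (k - 1) else v (j.1 + 1)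

/-- The homomorphism deviating at position `m` with value `x`. -/
def capDev {V : Type*} (v : ℕ → V) (k m : ℕ) (x : V) : Fin (k + 1) → V :=
  fun j => if j.1 < m then v (j.1 + 1) else if j.1 = m then x else v (j.1 - 1)

/-- The condition on the images `u` of the spine of the caterpillar gadget. -/
def capCond {V : Type*} (H : SimpleGraph V) (v : ℕ → V) (k : ℕ)
    (u : Fin (k + 1) → V) : Prop :=
  u 0 = v 1 ∧ u (Fin.last k) = v (k - 1) ∧
    (∀ i : Fin k, H.Adj (u i.castSucc) (u i.succ)) ∧
    (∀ j, ∀ h1 : 1 ≤ j, ∀ h2 : j ≤ k - 1, H.Adj (u ⟨j, by omega⟩) (v j))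

/-- In a square-free graph `H`, for a path `v 0, …, v k` whose interior vertices
have odd degree, the number of homomorphisms of the caterpillar gadget with
`y ↦ v 1`, `z ↦ v (k-1)` and `w j ↦ v j` is odd.  Such a homomorphism is
encoded by the images `u : Fin (k+1) → V` of the path `y u₁ … u_{k-1} z`. -/
theorem stmt_12 {V : Type*} [Fintype V] [DecidableEq V] (H : SimpleGraph V)
    [DecidableRel H.Adj]
    (hsf : ¬ ∃ a b c d : V, a ≠ b ∧ a ≠ c ∧ a ≠ d ∧ b ≠ c ∧ b ≠ d ∧ c ≠ d ∧
      H.Adj a b ∧ H.Adj b c ∧ H.Adj c d ∧ H.Adj d a)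
    {k : ℕ} (hk : 1 ≤ k) (v : ℕ → V)
    (hvinj : ∀ i j, i ≤ k → j ≤ k → v i = v j → i = j)
    (hvadj : ∀ j, j < k → H.Adj (v j) (v (j + 1)))
    (hdeg : ∀ j, 1 ≤ j → j ≤ k - 1 → Odd (H.degree (v j))) :
    Odd (Nat.card {u : Fin (k + 1) → V //
      u 0 = v 1 ∧ u (Fin.last k) = v (k - 1) ∧
      (∀ i : Fin k, H.Adj (u i.castSucc) (u i.succ)) ∧
      (∀ j, ∀ h1 : 1 ≤ j, ∀ h2 : j ≤ k - 1, H.Adj (u ⟨j, by omega⟩) (v j))}) := by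
  classical
  -- uniqueness of common neighbours in a square-free graph
  have hcn : ∀ a b c d : V, a ≠ b → H.Adj a c → H.Adj b c → H.Adj a d → H.Adj b d →
      c = d := by
    intro a b c d hab hac hbc had hbd
    by_contra hcd
    exact hsf ⟨a, c, b, d, hac.ne, hab, had.ne, hbc.ne', hcd, hbd.ne,
      hac, hbc.symm, hbd, had.symm⟩
  -- adjacency of consecutive path vertices, with flexible indexing
  have hA : ∀ a b : ℕ, b < k → a = b + 1 → H.Adj (v a) (v b) := by
    intro a b hb ha
    subst ha
    exact (hvadj b hb).symm
  have hA' : ∀ a b : ℕ, a < k → b = a + 1 → H.Adj (v a) (v b) := by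
    intro a b ha hb
    subst hb
    exact hvadj a ha
  have hzero : ∀ h : (0 : ℕ) < k + 1, (⟨0, h⟩ : Fin (k + 1)) = 0 := by
    intro h; ext; simp
  -- pointwise values of the two model maps
  have hplusval : ∀ (j : ℕ) (hj : j < k + 1),
      capPlus v k ⟨j, hj⟩ = if j = k then v (k - 1) else v (j + 1) := fun _ _ => rfl
  have hdevval : ∀ (m : ℕ) (x : V) (j : ℕ) (hj : j < k + 1),
      capDev v k m x ⟨j, hj⟩
        = if j < m then v (j + 1) else if j = m then x else v (j - 1) :=
    fun _ _ _ _ => rfl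
  -- the straight map satisfies the condition
  have hplus : capCond H v k (capPlus v k) := by
    refine ⟨?_, ?_, ?_, ?_⟩
    · simp only [capPlus, Fin.val_zero]
      exact if_neg (by omega)
    · rw [show Fin.last k = ⟨k, by omega⟩ from rfl, hplusval, if_pos rfl]
    · intro i
      have hik : (i.1 : ℕ) < k := i.2
      simp only [capPlus, Fin.coe_castSucc, Fin.val_succ]
      split_ifs with h1 h2 h2
      · exact absurd h1 (by omega)
      · exact absurd h1 (by omega)
      · exact hA (i.1 + 1) (k - 1) (by omega) (by omega)
      · exact hA' (i.1 + 1) (i.1 + 1 + 1) (by omega) rfl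
    · intro j h1 h2
      rw [hplusval j (by omega), if_neg (by omega)]
      exact hA (j + 1) j (by omega) rfl
  -- deviating maps satisfy the condition
  have hdevcond : ∀ (m : ℕ) (x : V), 1 ≤ m → m ≤ k - 1 → H.Adj (v m) x →
      capCond H v k (capDev v k m x) := by
    intro m x hm1 hm2 hxadj
    refine ⟨?_, ?_, ?_, ?_⟩
    · simp only [capDev, Fin.val_zero]
      exact if_pos (by omega)
    · rw [show Fin.last k = ⟨k, by omega⟩ from rfl, hdevval, if_neg (by omega),
        if_neg (by omega)]
    · intro i
      have hik : (i.1 : ℕ) < k := i.2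
      simp only [capDev, Fin.coe_castSucc, Fin.val_succ]
      rcases lt_trichotomy (i.1 : ℕ) m with h | h | h
      · rw [if_pos h]
        by_cases h2 : (i.1 : ℕ) + 1 < m
        · rw [if_pos h2]
          exact hA' (i.1 + 1) (i.1 + 1 + 1) (by omega) rfl
        · rw [if_neg h2, if_pos (show (i.1 : ℕ) + 1 = m from by omega),
            show (i.1 : ℕ) + 1 = m from by omega]
          exact hxadj
      · rw [if_neg (by omega), if_pos h, if_neg (by omega), if_neg (by omega),
          show (i.1 : ℕ) + 1 - 1 = m from by omega]
        exact hxadj.symm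
      · rw [if_neg (by omega), if_neg (by omega), if_neg (by omega), if_neg (by omega)]
        exact hA' (i.1 - 1) (i.1 + 1 - 1) (by omega) (by omega)
    · intro j h1 h2
      rw [hdevval m x j (by omega)]
      split_ifs with hj1 hj2
      · exact hA (j + 1) j (by omega) rfl
      · rw [hj2]; exact hxadj.symm
      · exact hA' (j - 1) j (by omega) (by omega)
  -- the classification bijection
  set S : Fin (k - 1) → Type _ :=
    fun m => {x : V // H.Adj (v (m.1 + 1)) x ∧ x ≠ v (m.1 + 2)} with hS
  let g : Option (Σ m : Fin (k - 1), S m) → {u : Fin (k + 1) → V // capCond H v k u} :=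
    fun o => match o with
    | none => ⟨capPlus v k, hplus⟩
    | some ⟨m, x⟩ => ⟨capDev v k (m.1 + 1) x.1,
        hdevcond (m.1 + 1) x.1 (by omega) (by have := m.2; omega) x.2.1⟩
  have hginj : Function.Injective g := by
    rintro (_ | ⟨m, x⟩) (_ | ⟨m', x'⟩) hab
    · rfl
    · exfalso
      have hm' := m'.2
      have hval : capPlus v k = capDev v k (m'.1 + 1) x'.1 := congrArg Subtype.val hab
      have h := congrFun hval ⟨m'.1 + 1, by omega⟩
      rw [hplusval, hdevval, if_neg (by omega), if_neg (by omega), if_pos rfl] at h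
      exact x'.2.2 h.symm
    · exfalso
      have hm := m.2
      have hval : capDev v k (m.1 + 1) x.1 = capPlus v k := congrArg Subtype.val hab
      have h := congrFun hval ⟨m.1 + 1, by omega⟩
      rw [hdevval, hplusval, if_neg (by omega), if_pos rfl, if_neg (by omega)] at h
      exact x.2.2 h
    · have hm := m.2; have hm' := m'.2
      have hval : capDev v k (m.1 + 1) x.1 = capDev v k (m'.1 + 1) x'.1 :=
        congrArg Subtype.val hab
      have hmm : m = m' := by
        by_contra hne
        rcases lt_trichotomy m.1 m'.1 with h | h | h
        · have h2 := congrFun hval ⟨m.1 + 1, by omega⟩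
          rw [hdevval, hdevval, if_neg (by omega), if_pos rfl, if_pos (by omega)] at h2
          exact x.2.2 h2
        · exact hne (Fin.ext h)
        · have h2 := congrFun hval ⟨m'.1 + 1, by omega⟩
          rw [hdevval, hdevval, if_pos (by omega), if_neg (by omega), if_pos rfl] at h2
          exact x'.2.2 h2.symm
      subst hmm
      have hxx : x = x' := by
        apply Subtype.ext
        have h2 := congrFun hval ⟨m.1 + 1, by omega⟩
        rw [hdevval, hdevval, if_neg (by omega), if_pos rfl, if_neg (by omega),
          if_pos rfl] at h2
        exact h2
      rw [hxx]
  have hgsurj : Function.Surjective g := by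
    rintro ⟨u, h0, hlast, hadj, hpend⟩
    by_cases hall : ∀ j, ∀ _ : j < k, u ⟨j, by omega⟩ = v (j + 1)
    · refine ⟨none, ?_⟩
      apply Subtype.ext
      show capPlus v k = u
      funext j
      obtain ⟨jv, hjlt⟩ := j
      rw [hplusval]
      by_cases hj : jv = k
      · rw [if_pos hj]
        have hje : (⟨jv, hjlt⟩ : Fin (k + 1)) = Fin.last k := Fin.ext hj
        rw [hje, hlast]
      · rw [if_neg hj]
        exact (hall jv (by omega)).symm
    · push_neg at hall
      have hP : ∃ j, ∃ hjk : j < k, u ⟨j, by omega⟩ ≠ v (j + 1) := hall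
      have hPmin : ∃ m, (∃ hmk : m < k, u ⟨m, by omega⟩ ≠ v (m + 1)) ∧
          ∀ j, j < m → ∀ hjk : j < k, u ⟨j, by omega⟩ = v (j + 1) := by
        refine ⟨Nat.find hP, Nat.find_spec hP, ?_⟩
        intro j hj hjk
        by_contra hcontra
        exact Nat.find_min hP hj ⟨hjk, hcontra⟩
      obtain ⟨m, ⟨hmk, hmne⟩, hmin⟩ := hPmin
      have h1m : 1 ≤ m := by
        rcases Nat.eq_zero_or_pos m with h | h
        · exfalso
          apply hmne
          subst h
          rw [hzero]
          exact h0
        · exact h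
      set x := u ⟨m, by omega⟩ with hxdef
      have hxadj : H.Adj (v m) x := (hpend m h1m (by omega)).symm
      have hxne : x ≠ v (m + 1) := hmne
      -- forcing: beyond the deviation the map is determined
      have hforce : ∀ j, m + 1 ≤ j → ∀ _ : j ≤ k, u ⟨j, by omega⟩ = v (j - 1) := by
        intro j hj
        induction j, hj using Nat.le_induction with
        | base =>
          intro hjk
          rw [show m + 1 - 1 = m from by omega]
          rcases eq_or_lt_of_le hjk with h | h
          · rw [show (⟨m + 1, by omega⟩ : Fin (k + 1)) = Fin.last k from Fin.ext h,
              hlast]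
            exact congrArg v (by omega)
          · have ha : H.Adj x (u ⟨m + 1, by omega⟩) := hadj ⟨m, hmk⟩
            have hp : H.Adj (u ⟨m + 1, by omega⟩) (v (m + 1)) :=
              hpend (m + 1) (by omega) (by omega)
            exact hcn x (v (m + 1)) (u ⟨m + 1, by omega⟩) (v m) hxne ha hp.symm
              hxadj.symm (hvadj m (by omega)).symm
        | succ j hj ih =>
          intro hjk
          have huj : u ⟨j, by omega⟩ = v (j - 1) := ih (by omega)
          rw [show j + 1 - 1 = j from by omega]
          rcases eq_or_lt_of_le hjk with h | h
          · rw [show (⟨j + 1, by omega⟩ : Fin (k + 1)) = Fin.last k from Fin.ext h,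
              hlast]
            exact congrArg v (by omega)
          · have ha : H.Adj (v (j - 1)) (u ⟨j + 1, by omega⟩) := by
              have h2 : H.Adj (u ⟨j, by omega⟩) (u ⟨j + 1, by omega⟩) :=
                hadj ⟨j, by omega⟩
              rwa [huj] at h2
            have hp : H.Adj (u ⟨j + 1, by omega⟩) (v (j + 1)) :=
              hpend (j + 1) (by omega) (by omega)
            have hne : v (j - 1) ≠ v (j + 1) := by
              intro hcontra
              have := hvinj (j - 1) (j + 1) (by omega) (by omega) hcontra
              omega
            exact hcn (v (j - 1)) (v (j + 1)) (u ⟨j + 1, by omega⟩) (v j) hne ha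
              hp.symm (hA' (j - 1) j (by omega) (by omega)) (hvadj j (by omega)).symm
      refine ⟨some ⟨⟨m - 1, by omega⟩, ⟨x, ?_, ?_⟩⟩, ?_⟩
      · rw [show m - 1 + 1 = m from by omega]; exact hxadj
      · rw [show m - 1 + 2 = m + 1 from by omega]; exact hxne
      · apply Subtype.ext
        show capDev v k (m - 1 + 1) x = u
        rw [show m - 1 + 1 = m from by omega]
        funext j
        obtain ⟨jv, hjlt⟩ := j
        rw [hdevval]
        rcases lt_trichotomy jv m with h | h | h
        · rw [if_pos h]
          exact (hmin jv h (by omega)).symm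
        · rw [if_neg (by omega), if_pos h]
          subst h
          rfl
        · rw [if_neg (by omega), if_neg (by omega)]
          exact (hforce jv (by omega) (by omega)).symm
  -- counting
  have hcount : Nat.card {u : Fin (k + 1) → V // capCond H v k u}
      = Nat.card (Option (Σ m : Fin (k - 1), S m)) :=
    (Nat.card_congr (Equiv.ofBijective g ⟨hginj, hgsurj⟩)).symm
  show Odd (Nat.card {u : Fin (k + 1) → V // capCond H v k u})
  rw [hcount, Nat.card_eq_fintype_card, Fintype.card_option]
  refine Even.add_one ?_
  rw [Fintype.card_sigma]
  refine Finset.even_sum _ fun m _ => ?_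
  have hm := m.2
  rw [← Nat.card_eq_fintype_card]
  have hScard : Nat.card (S m) = H.degree (v (m.1 + 1)) - 1 := by
    show Nat.card {x : V // H.Adj (v (m.1 + 1)) x ∧ x ≠ v (m.1 + 2)}
      = H.degree (v (m.1 + 1)) - 1
    rw [Nat.card_eq_fintype_card, Fintype.card_subtype]
    have hfe : (Finset.univ.filter fun x => H.Adj (v (m.1 + 1)) x ∧ x ≠ v (m.1 + 2))
        = (H.neighborFinset (v (m.1 + 1))).erase (v (m.1 + 2)) := by
      ext y
      simp [SimpleGraph.mem_neighborFinset, and_comm]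
    rw [hfe, Finset.card_erase_of_mem, SimpleGraph.card_neighborFinset_eq_degree]
    rw [SimpleGraph.mem_neighborFinset]
    exact hvadj (m.1 + 1) (by omega)
  rw [hScard]
  exact Nat.Odd.sub_odd (hdeg (m.1 + 1) (by omega) (by omega)) odd_one
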